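/- Let G and H be finite connected simple graphs, neither of which is a path, sharing exactly one common vertex v. Then the vertex sum G ⊕_v H admits a barbell partition. -/

import Mathlib

open SimpleGraph

/-- A barbell partition of a graph `G`: a partition of the vertex set into
`R`, `W1`, `W2` with `W1, W2` nonempty, no edges between `W1` and `W2`, and
every vertex of `R` has a number of neighbors in each `Wi` different from 1. -/
def IsBarbellPartition {V : Type*} (G : SimpleGraph V) (R W1 W2 : Set V) : Prop :=
  R ∪ W1 ∪ W2 = Set.univ ∧ Disjoint R W1 ∧ Disjoint R W2 ∧ Disjoint W1 W2 ∧
  W1.Nonempty ∧ W2.Nonempty ∧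
  (∀ w1 ∈ W1, ∀ w2 ∈ W2, ¬ G.Adj w1 w2) ∧
  (∀ v ∈ R, (G.neighborSet v ∩ W1).ncard ≠ 1 ∧ (G.neighborSet v ∩ W2).ncard ≠ 1)

/-- `G` admits a barbell partition. -/
def HasBarbellPartition {V : Type*} (G : SimpleGraph V) : Prop :=
  ∃ R W1 W2 : Set V, IsBarbellPartition G R W1 W2

/-- A fort of `G`: a nonempty vertex set `F` such that no vertex outside `F`
has exactly one neighbor in `F`. -/
def IsFort {V : Type*} (G : SimpleGraph V) (F : Set V) : Prop :=
  F.Nonempty ∧ ∀ v ∉ F, (G.neighborSet v ∩ F).ncard ≠ 1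

/-- The vertex sum `G ⊕_v H`: disjoint copies of `G` and `H` with the vertex
`a` of `G` identified with the vertex `b` of `H` (represented by `Sum.inl a`). -/
def vertexSum {α β : Type*} (G : SimpleGraph α) (H : SimpleGraph β) (a : α) (b : β) :
    SimpleGraph (α ⊕ {y : β // y ≠ b}) where
  Adj x y :=
    match x, y with
    | Sum.inl u, Sum.inl w => G.Adj u w
    | Sum.inl u, Sum.inr w => u = a ∧ H.Adj b w.1
    | Sum.inr u, Sum.inl w => w = a ∧ H.Adj u.1 b
    | Sum.inr u, Sum.inr w => H.Adj u.1 w.1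
  symm := by
    constructor
    rintro (u | u) (w | w) h
    · exact h.symm
    · exact ⟨h.1, h.2.symm⟩
    · exact ⟨h.1, h.2.symm⟩
    · exact h.symm
  loopless := by
    constructor
    rintro (u | u) h
    · exact G.irrefl h
    · exact H.irrefl h

/-- `G` is a path graph. -/
def IsPathGraph {α : Type*} (G : SimpleGraph α) : Prop :=
  ∃ n : ℕ, Nonempty (G ≃g SimpleGraph.pathGraph n)

def pathRev (n : ℕ) : pathGraph n ≃g pathGraph n where
  toEquiv := (Fin.revPerm : Equiv.Perm (Fin n))
  map_rel_iff' := by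
    intro i j
    have hi := i.isLt; have hj := j.isLt
    simp only [Fin.revPerm_apply, pathGraph_adj, Fin.val_rev]
    omega

lemma isPathGraph_extend {α : Type*} (G : SimpleGraph α) (a c : α) (hca : c ≠ a)
    (hN : G.neighborSet a = {c})
    (hsub : ((G.induce {x | x ≠ a}).neighborSet ⟨c, hca⟩).Subsingleton)
    (hp : IsPathGraph (G.induce {x | x ≠ a})) : IsPathGraph G := by
  classical
  obtain ⟨n, ⟨e⟩⟩ := hp
  set c' : ({x | x ≠ a} : Set α) := ⟨c, hca⟩ with hc'
  have hn : 0 < n := (e c').pos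
  have hend : (e c').val = 0 ∨ (e c').val = n - 1 := by
    by_contra h
    push_neg at h
    have hk := (e c').isLt
    have h1 : (G.induce {x | x ≠ a}).Adj c' (e.symm ⟨(e c').val - 1, by omega⟩) := by
      rw [← e.map_rel_iff, e.apply_symm_apply, pathGraph_adj]
      simp only [Fin.val_mk]
      omega
    have h2 : (G.induce {x | x ≠ a}).Adj c' (e.symm ⟨(e c').val + 1, by omega⟩) := by
      rw [← e.map_rel_iff, e.apply_symm_apply, pathGraph_adj]
      simp
    have heq := hsub h1 h2
    have : ((e c').val - 1 : ℕ) = (e c').val + 1 := by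
      have := e.symm.injective heq
      simpa using congrArg Fin.val this
    omega
  obtain ⟨e2, he2⟩ : ∃ e2 : G.induce {x | x ≠ a} ≃g pathGraph n, (e2 c').val = 0 := by
    rcases hend with h | h
    · exact ⟨e, h⟩
    · refine ⟨e.trans (pathRev n), ?_⟩
      have hk := (e c').isLt
      show ((pathRev n) (e c')).val = 0
      show (Fin.rev (e c')).val = 0
      rw [Fin.val_rev]
      omega
  clear hend e
  have he2' : e2 c' = ⟨0, hn⟩ := Fin.ext he2
  refine ⟨n+1, ⟨?_⟩⟩
  refine { toFun := fun x => if h : x = a then 0 else Fin.succ (e2 ⟨x, h⟩),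
           invFun := fun i => Fin.cases a (fun j => (e2.symm j).val) i,
           left_inv := ?_, right_inv := ?_, map_rel_iff' := ?_ }
  · intro x
    by_cases h : x = a
    · subst h; simp
    · simp [dif_neg h]
  · intro i
    refine Fin.cases ?_ (fun j => ?_) i
    · simp
    · have hj : (e2.symm j).val ≠ a := (e2.symm j).2
      simp only [Fin.cases_succ, dif_neg hj]
      congr 1
      have : (⟨(e2.symm j).val, hj⟩ : ({x | x ≠ a} : Set α)) = e2.symm j := Subtype.ext rfl
      simp [hj]
  · intro x y
    simp only [Equiv.coe_fn_mk]
    have hadj_a : ∀ z : α, G.Adj a z ↔ z = c := by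
      intro z
      rw [← SimpleGraph.mem_neighborSet, hN, Set.mem_singleton_iff]
    have key : ∀ (z : α) (hz : ¬ z = a), (z = c ↔ e2 ⟨z, hz⟩ = ⟨0, hn⟩) := by
      intro z hz
      rw [← he2']
      constructor
      · intro h; exact congrArg e2 (Subtype.ext h)
      · intro h; exact congrArg Subtype.val (e2.toEquiv.injective h)
    by_cases hx : x = a <;> by_cases hy : y = a
    · rw [dif_pos hx, dif_pos hy, hx, hy]
      simp [pathGraph_adj]
    · rw [dif_pos hx, dif_neg hy, pathGraph_adj, hx, hadj_a, key y hy]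
      simp only [Fin.val_zero, Fin.val_succ]
      constructor
      · rintro (h | h)
        · exact Fin.ext (by omega)
        · omega
      · intro h; left; rw [h]
    · rw [dif_pos hy, dif_neg hx, pathGraph_adj, hy]
      rw [show G.Adj x a ↔ G.Adj a x from ⟨fun h => h.symm, fun h => h.symm⟩, hadj_a, key x hx]
      simp only [Fin.val_zero, Fin.val_succ]
      constructor
      · rintro (h | h)
        · omega
        · exact Fin.ext (by omega)
      · intro h; right; rw [h]
    · rw [dif_neg hx, dif_neg hy, pathGraph_adj]
      have : G.Adj x y ↔ (pathGraph n).Adj (e2 ⟨x, hx⟩) (e2 ⟨y, hy⟩) := by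
        rw [e2.map_rel_iff]
        exact Iff.rfl
      rw [this, pathGraph_adj]
      simp only [Fin.val_succ]
      omega

lemma isPathGraph_of_unique {α : Type*} (G : SimpleGraph α) (a : α) (h : ∀ x, x = a) :
    IsPathGraph G := by
  refine ⟨1, ⟨{ toEquiv := ⟨fun _ => 0, fun _ => a, fun x => (h x).symm, fun i => Subsingleton.elim _ _⟩, map_rel_iff' := ?_ }⟩⟩
  intro x y
  rw [h x, h y]
  simp [pathGraph_adj]

lemma isPathGraph_of_pair {α : Type*} (G : SimpleGraph α) (a c : α) (hac : G.Adj a c)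
    (h : ∀ x, x = a ∨ x = c) : IsPathGraph G := by
  classical
  have hne : a ≠ c := G.ne_of_adj hac
  refine ⟨2, ⟨{ toEquiv := ⟨fun x => if x = a then 0 else 1, fun i => if i = 0 then a else c, ?_, ?_⟩, map_rel_iff' := ?_ }⟩⟩
  · intro x
    rcases h x with rfl | rfl
    · simp
    · simp [hne.symm]
  · intro i
    fin_cases i
    · simp
    · simp [hne.symm]
  · intro x y
    simp only [Equiv.coe_fn_mk]
    rcases h x with rfl | rfl <;> rcases h y with rfl | rfl <;>
      simp [pathGraph_adj, hne, hne.symm, hac, hac.symm]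

lemma reach_aux {α : Type*} (G : SimpleGraph α) (a c : α) (hN : G.neighborSet a = {c}) :
    ∀ (m : ℕ) (x y : α) (hx : x ≠ a) (hy : y ≠ a) (w : G.Walk x y), w.length ≤ m →
      (G.induce {x | x ≠ a}).Reachable ⟨x, hx⟩ ⟨y, hy⟩ := by
  have hmem : ∀ z : α, G.Adj a z → z = c := by
    intro z hz
    have : z ∈ G.neighborSet a := hz
    rwa [hN, Set.mem_singleton_iff] at this
  intro m
  induction m with
  | zero =>
    intro x y hx hy w hw
    cases w with
    | nil => exact Reachable.refl _
    | cons h p => simp [SimpleGraph.Walk.length_cons] at hw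
  | succ m ih =>
    intro x y hx hy w hw
    cases w with
    | nil => exact Reachable.refl _
    | @cons _ z _ h p =>
      by_cases hz : z = a
      · cases p with
        | nil => exact absurd hz hy
        | @cons _ z2 _ h2 q =>
          rw [hz] at h2 h
          have hz2 : z2 = c := hmem z2 h2
          have hxc : x = c := hmem x h.symm
          have hlen : q.length ≤ m := by
            simp only [SimpleGraph.Walk.length_cons] at hw
            omega
          have hz2a : z2 ≠ a := by rw [hz2, ← hxc]; exact hx
          have hres := ih z2 y hz2a hy q hlen
          have hxz : (⟨x, hx⟩ : ({x | x ≠ a} : Set α)) = ⟨z2, hz2a⟩ :=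
            Subtype.ext (hxc.trans hz2.symm)
          rw [hxz]
          exact hres
      · have step : (G.induce {x | x ≠ a}).Adj ⟨x, hx⟩ ⟨z, hz⟩ := h
        refine (step.reachable).trans (ih z y hz hy p ?_)
        simp only [SimpleGraph.Walk.length_cons] at hw
        omega

lemma connected_induce_ne {α : Type*} (G : SimpleGraph α) (hc : G.Connected)
    (a c : α) (hN : G.neighborSet a = {c}) :
    (G.induce {x | x ≠ a}).Connected := by
  have hca : c ≠ a := by
    have : c ∈ G.neighborSet a := by rw [hN]; rfl
    exact (G.ne_of_adj this).symm
  haveI : Nonempty ({x | x ≠ a} : Set α) := ⟨⟨c, hca⟩⟩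
  refine ⟨?_⟩
  intro x y
  obtain ⟨w⟩ := hc.preconnected x.1 y.1
  have := reach_aux G a c hN w.length x.1 y.1 x.2 y.2 w le_rfl
  simpa using this

universe u

lemma exists_fort_notMem : ∀ (n : ℕ) (α : Type u) [Finite α] (G : SimpleGraph α) (a : α),
    Nat.card α ≤ n → G.Connected → ¬ IsPathGraph G → ∃ F : Set α, IsFort G F ∧ a ∉ F := by
  intro n
  induction n with
  | zero =>
    intro α _ G a hcard hc hp
    haveI : Nonempty α := ⟨a⟩
    have : 0 < Nat.card α := Nat.card_pos
    omega
  | succ n ih =>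
    intro α _ G a hcard hc hp
    classical
    haveI : Nonempty α := ⟨a⟩
    by_cases h1 : (G.neighborSet a).ncard = 1
    · -- a has a unique neighbor c
      obtain ⟨c, hc1⟩ := Set.ncard_eq_one.mp h1
      have hadj : G.Adj a c := by rw [← SimpleGraph.mem_neighborSet, hc1]; rfl
      have hca : c ≠ a := (G.ne_of_adj hadj).symm
      by_cases h2 : (G.neighborSet c).ncard = 2
      · -- recursive case
        set s : Set α := {x | x ≠ a} with hs
        have hN : G.neighborSet a = {c} := hc1
        have hG'c : (G.induce s).Connected := connected_induce_ne G hc a c hN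
        set c' : s := ⟨c, hca⟩ with hc'def
        have hsub : ((G.induce s).neighborSet c').Subsingleton := by
          have hma : a ∈ G.neighborSet c := hadj.symm
          have hdiff : (G.neighborSet c \ {a}).ncard = 1 := by
            rw [Set.ncard_diff_singleton_of_mem hma, h2]
          obtain ⟨d, hd⟩ := Set.ncard_eq_one.mp hdiff
          intro u hu v hv
          have hu2 : G.Adj c u.1 := hu
          have hv2 : G.Adj c v.1 := hv
          have hu' : u.1 ∈ G.neighborSet c \ {a} := ⟨hu2, u.2⟩
          have hv' : v.1 ∈ G.neighborSet c \ {a} := ⟨hv2, v.2⟩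
          rw [hd, Set.mem_singleton_iff] at hu' hv'
          exact Subtype.ext (hu'.trans hv'.symm)
        have hp' : ¬ IsPathGraph (G.induce s) := fun hpath =>
          hp (isPathGraph_extend G a c hca hN hsub hpath)
        have hcard' : Nat.card s ≤ n := by
          have h3 : Nat.card s = Set.ncard s := Nat.card_coe_set_eq s
          have h4 : s = Set.univ \ {a} := by ext z; simp [hs]
          have h5 : (Set.univ \ ({a} : Set α)).ncard = (Set.univ : Set α).ncard - 1 := by
            rw [Set.ncard_diff_singleton_of_mem (Set.mem_univ a)]
          have h6 : (Set.univ : Set α).ncard = Nat.card α := Set.ncard_univ α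
          have h7 : s.ncard = (Set.univ : Set α).ncard - 1 := by rw [h4]; exact h5
          have hpos : 0 < Nat.card α := Nat.card_pos
          omega
        obtain ⟨F', hF', hcF'⟩ := ih s (G.induce s) c' hcard' hG'c hp'
        refine ⟨Subtype.val '' F', ⟨hF'.1.image _, ?_⟩, ?_⟩
        · intro v hv
          by_cases hva : v = a
          · rw [hva, hN]
            have hemp : ({c} : Set α) ∩ (Subtype.val '' F') = ∅ := by
              ext z
              simp only [Set.mem_inter_iff, Set.mem_singleton_iff, Set.mem_image,
                Set.mem_empty_iff_false, iff_false, not_and]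
              rintro rfl ⟨z', hz', hz'val⟩
              exact hcF' (by rwa [show z' = c' from Subtype.ext hz'val] at hz')
            rw [hemp]
            simp
          · have hvs : v ∈ s := hva
            have hvF' : (⟨v, hvs⟩ : s) ∉ F' := fun h => hv ⟨_, h, rfl⟩
            have himg : G.neighborSet v ∩ (Subtype.val '' F') =
                Subtype.val '' ((G.induce s).neighborSet ⟨v, hvs⟩ ∩ F') := by
              ext z
              constructor
              · rintro ⟨hz, z', hz', rfl⟩
                exact ⟨z', ⟨hz, hz'⟩, rfl⟩
              · rintro ⟨z', ⟨hz1, hz2⟩, rfl⟩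
                exact ⟨hz1, z', hz2, rfl⟩
            rw [himg, Set.ncard_image_of_injective _ Subtype.val_injective]
            exact hF'.2 _ hvF'
        · rintro ⟨z, hz, hzv⟩
          exact z.2 hzv
      · -- degree of c is not 2 : F = {a, c}ᶜ
        refine ⟨({a, c} : Set α)ᶜ, ⟨?_, ?_⟩, by simp⟩
        · by_contra hne
          rw [Set.not_nonempty_iff_eq_empty] at hne
          have hall : ∀ x : α, x = a ∨ x = c := by
            intro x
            by_contra hx
            push_neg at hx
            have hmemx : x ∈ ({a, c} : Set α)ᶜ := by simp [hx.1, hx.2]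
            rw [hne] at hmemx
            exact hmemx
          exact hp (isPathGraph_of_pair G a c hadj hall)
        · intro v hv
          have hvac : v = a ∨ v = c := by simpa using Set.notMem_compl_iff.mp hv
          rcases hvac with hva | hvc
          · rw [hva, hc1]
            have hemp : ({c} : Set α) ∩ ({a, c} : Set α)ᶜ = ∅ := by
              ext z; simp +contextual
            rw [hemp]
            simp
          · rw [hvc]
            have hseteq : G.neighborSet c ∩ ({a, c} : Set α)ᶜ = G.neighborSet c \ {a} := by
              ext z
              simp only [Set.mem_inter_iff, Set.mem_compl_iff, Set.mem_insert_iff,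
                Set.mem_singleton_iff, Set.mem_diff, SimpleGraph.mem_neighborSet]
              constructor
              · rintro ⟨hz, h⟩
                exact ⟨hz, fun h' => h (Or.inl h')⟩
              · rintro ⟨hz, h⟩
                exact ⟨hz, by rintro (rfl | rfl); exact h rfl; exact G.irrefl hz⟩
            have hma : a ∈ G.neighborSet c := hadj.symm
            rw [hseteq, Set.ncard_diff_singleton_of_mem hma]
            have hpos : 0 < (G.neighborSet c).ncard :=
              (Set.ncard_pos (Set.toFinite _)).mpr ⟨a, hadj.symm⟩
            omega
    · -- degree of a is not 1 : F = {a}ᶜ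
      refine ⟨({a} : Set α)ᶜ, ⟨?_, ?_⟩, by simp⟩
      · by_contra hne
        rw [Set.not_nonempty_iff_eq_empty] at hne
        have hall : ∀ x : α, x = a := by
          intro x
          by_contra hx
          have hmemx : x ∈ ({a} : Set α)ᶜ := by simpa using hx
          rw [hne] at hmemx
          exact hmemx
        exact hp (isPathGraph_of_unique G a hall)
      · intro v hv
        have hva : v = a := by simpa using hv
        rw [hva]
        have hseteq : G.neighborSet a ∩ ({a} : Set α)ᶜ = G.neighborSet a := by
          ext z
          simp only [Set.mem_inter_iff, Set.mem_compl_iff, Set.mem_singleton_iff,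
            SimpleGraph.mem_neighborSet, and_iff_left_iff_imp]
          intro hz
          exact (G.ne_of_adj hz).symm
        rw [hseteq]
        exact h1

lemma vs_inl_inl {α β : Type*} (G : SimpleGraph α) (H : SimpleGraph β) (a : α) (b : β)
    (u w : α) : (vertexSum G H a b).Adj (Sum.inl u) (Sum.inl w) ↔ G.Adj u w := Iff.rfl

lemma vs_inl_inr {α β : Type*} (G : SimpleGraph α) (H : SimpleGraph β) (a : α) (b : β)
    (u : α) (w : {y : β // y ≠ b}) :
    (vertexSum G H a b).Adj (Sum.inl u) (Sum.inr w) ↔ u = a ∧ H.Adj b w.1 := Iff.rfl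

lemma vs_inr_inl {α β : Type*} (G : SimpleGraph α) (H : SimpleGraph β) (a : α) (b : β)
    (u : {y : β // y ≠ b}) (w : α) :
    (vertexSum G H a b).Adj (Sum.inr u) (Sum.inl w) ↔ w = a ∧ H.Adj u.1 b := Iff.rfl

lemma vs_inr_inr {α β : Type*} (G : SimpleGraph α) (H : SimpleGraph β) (a : α) (b : β)
    (u w : {y : β // y ≠ b}) :
    (vertexSum G H a b).Adj (Sum.inr u) (Sum.inr w) ↔ H.Adj u.1 w.1 := Iff.rfl

lemma ncard_subtype_set {β : Type*} (b : β) (S : Set β) (hb : b ∉ S) :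
    {w : {y : β // y ≠ b} | w.1 ∈ S}.ncard = S.ncard := by
  have h4 : Subtype.val '' {w : {y : β // y ≠ b} | w.1 ∈ S} = S := by
    ext z
    constructor
    · rintro ⟨w, hw, rfl⟩; exact hw
    · intro hz; exact ⟨⟨z, fun h => hb (h ▸ hz)⟩, hz, rfl⟩
  calc {w : {y : β // y ≠ b} | w.1 ∈ S}.ncard
      = (Subtype.val '' {w : {y : β // y ≠ b} | w.1 ∈ S}).ncard :=
        (Set.ncard_image_of_injective _ Subtype.val_injective).symm
    _ = S.ncard := by rw [h4]

/-- The vertex sum of two connected graphs, neither of which is a path, admits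
a barbell partition. -/
theorem vertexSum_hasBarbellPartition_of_not_path {α β : Type*} [Fintype α] [Fintype β]
    (G : SimpleGraph α) (H : SimpleGraph β) (a : α) (b : β)
    (hGc : G.Connected) (hHc : H.Connected)
    (hGp : ¬ IsPathGraph G) (hHp : ¬ IsPathGraph H) :
    HasBarbellPartition (vertexSum G H a b) := by
  classical
  obtain ⟨FG, hFG, haFG⟩ := exists_fort_notMem (Nat.card α) α G a le_rfl hGc hGp
  obtain ⟨FH, hFH, hbFH⟩ := exists_fort_notMem (Nat.card β) β H b le_rfl hHc hHp
  set W1 : Set (α ⊕ {y : β // y ≠ b}) := Sum.inl '' FG with hW1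
  set W2 : Set (α ⊕ {y : β // y ≠ b}) := Sum.inr '' {w : {y : β // y ≠ b} | w.1 ∈ FH} with hW2
  refine ⟨(W1 ∪ W2)ᶜ, W1, W2, ?_, ?_, ?_, ?_, ?_, ?_, ?_, ?_⟩
  · ext x
    simp only [Set.mem_union, Set.mem_compl_iff, Set.mem_univ, iff_true]
    tauto
  · rw [Set.disjoint_left]; intro x hx hx1; exact hx (Or.inl hx1)
  · rw [Set.disjoint_left]; intro x hx hx2; exact hx (Or.inr hx2)
  · rw [Set.disjoint_left]
    rintro x ⟨u, hu, rfl⟩ ⟨w, hw, h⟩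
    exact nomatch h
  · obtain ⟨x, hx⟩ := hFG.1
    exact ⟨Sum.inl x, x, hx, rfl⟩
  · obtain ⟨y, hy⟩ := hFH.1
    have hyb : y ≠ b := fun h => hbFH (h ▸ hy)
    exact ⟨Sum.inr ⟨y, hyb⟩, ⟨y, hyb⟩, hy, rfl⟩
  · rintro w1 ⟨u, hu, rfl⟩ w2 ⟨w, hw, rfl⟩ hadj
    rw [vs_inl_inr] at hadj
    exact haFG (hadj.1 ▸ hu)
  · rintro (u | w) hv
    · have hu : u ∉ FG := fun h => hv (Or.inl ⟨u, h, rfl⟩)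
      constructor
      · have himg : (vertexSum G H a b).neighborSet (Sum.inl u) ∩ W1 =
            Sum.inl '' (G.neighborSet u ∩ FG) := by
          ext x
          cases x with
          | inl z =>
            simp only [Set.mem_inter_iff, SimpleGraph.mem_neighborSet, vs_inl_inl, hW1,
              Set.mem_image, Sum.inl.injEq]
            constructor
            · rintro ⟨h1, z', hz', rfl⟩
              exact ⟨z', ⟨h1, hz'⟩, rfl⟩
            · rintro ⟨z', ⟨h1, h2⟩, rfl⟩
              exact ⟨h1, z', h2, rfl⟩
          | inr z =>
            simp only [Set.mem_inter_iff, hW1, Set.mem_image]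
            constructor
            · rintro ⟨h1, z', hz', h⟩
              exact nomatch h
            · rintro ⟨z', hz', h⟩
              exact nomatch h
        rw [himg, Set.ncard_image_of_injective _ Sum.inl_injective]
        exact hFG.2 u hu
      · by_cases hua : u = a
        · have himg : (vertexSum G H a b).neighborSet (Sum.inl u) ∩ W2 =
              Sum.inr '' {w : {y : β // y ≠ b} | w.1 ∈ H.neighborSet b ∩ FH} := by
            ext x
            cases x with
            | inl z =>
              simp only [Set.mem_inter_iff, hW2, Set.mem_image]
              constructor
              · rintro ⟨h1, z', hz', h⟩
                exact nomatch h
              · rintro ⟨z', hz', h⟩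
                exact nomatch h
            | inr z =>
              simp only [Set.mem_inter_iff, SimpleGraph.mem_neighborSet, vs_inl_inr, hW2,
                Set.mem_image, Sum.inr.injEq]
              constructor
              · rintro ⟨⟨h1, h2⟩, z', hz', rfl⟩
                exact ⟨z', ⟨h2, hz'⟩, rfl⟩
              · rintro ⟨z', ⟨h1, h2⟩, rfl⟩
                exact ⟨⟨hua, h1⟩, z', h2, rfl⟩
          rw [himg, Set.ncard_image_of_injective _ Sum.inr_injective,
            ncard_subtype_set b _ (fun h => hbFH h.2)]
          exact hFH.2 b hbFH
        · have hemp : (vertexSum G H a b).neighborSet (Sum.inl u) ∩ W2 = ∅ := by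
            ext x
            cases x with
            | inl z =>
              simp only [Set.mem_inter_iff, hW2, Set.mem_image, Set.mem_empty_iff_false,
                iff_false, not_and]
              rintro h1 ⟨z', hz', h⟩
              exact nomatch h
            | inr z =>
              simp only [Set.mem_inter_iff, SimpleGraph.mem_neighborSet, vs_inl_inr,
                Set.mem_empty_iff_false, iff_false, not_and]
              rintro ⟨h1, h2⟩
              exact absurd h1 hua
          rw [hemp]
          simp
    · have hw : w.1 ∉ FH := fun h => hv (Or.inr ⟨w, h, rfl⟩)
      constructor
      · have hemp : (vertexSum G H a b).neighborSet (Sum.inr w) ∩ W1 = ∅ := by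
          ext x
          cases x with
          | inl z =>
            simp only [Set.mem_inter_iff, SimpleGraph.mem_neighborSet, vs_inr_inl, hW1,
              Set.mem_image, Sum.inl.injEq, Set.mem_empty_iff_false, iff_false, not_and]
            rintro ⟨rfl, h2⟩ ⟨z', hz', rfl⟩
            exact haFG hz'
          | inr z =>
            simp only [Set.mem_inter_iff, hW1, Set.mem_image, Set.mem_empty_iff_false,
              iff_false, not_and]
            rintro h1 ⟨z', hz', h⟩
            exact nomatch h
        rw [hemp]
        simp
      · have himg : (vertexSum G H a b).neighborSet (Sum.inr w) ∩ W2 =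
            Sum.inr '' {w' : {y : β // y ≠ b} | w'.1 ∈ H.neighborSet w.1 ∩ FH} := by
          ext x
          cases x with
          | inl z =>
            simp only [Set.mem_inter_iff, hW2, Set.mem_image, Set.mem_empty_iff_false]
            constructor
            · rintro ⟨h1, z', hz', h⟩
              exact nomatch h
            · rintro ⟨z', hz', h⟩
              exact nomatch h
          | inr z =>
            simp only [Set.mem_inter_iff, SimpleGraph.mem_neighborSet, vs_inr_inr, hW2,
              Set.mem_image, Sum.inr.injEq]
            constructor
            · rintro ⟨h1, z', hz', rfl⟩
              exact ⟨z', ⟨h1, hz'⟩, rfl⟩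
            · rintro ⟨z', ⟨h1, h2⟩, rfl⟩
              exact ⟨h1, z', h2, rfl⟩
        rw [himg, Set.ncard_image_of_injective _ Sum.inr_injective,
          ncard_subtype_set b _ (fun h => hbFH h.2)]
        exact hFH.2 w.1 hw
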